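/- arXiv:2210.05523 — 2 statements merged into one kernel-verified Lean document; each statement's English description precedes it below -/
import Mathlib

section
/- Let Ω ⊂ ℝ^d be open and bounded, Ω⁻ open with closure(Ω⁻) ⊆ Ω, Ω⁺ = Ω \ closure(Ω⁻), and Γ = frontier(Ω⁻). Let n : Γ → ℝ^d be a given vector field, f : Ω → ℝ a function whose one-sided limits from Ω⁻ and Ω⁺ exist at every point of Γ, γ, ρ : Γ → ℝ, and u_b : ∂Ω → ℝ. Suppose V : ℝ^d → ℝ is twice continuously differentiable and satisfies, for every x ∈ Γ: V(x) = −γ(x), n(x)·∇V(x) = −ρ(x), and ΔV(x) = −[[f]](x). Suppose w : Ω → ℝ is twice continuously differentiable on Ω⁻ ∪ Ω⁺, that w, ∇w extend continuously to each point of Γ with equal one-sided limits from Ω⁻ and Ω⁺ (i.e., [[w]] = 0 and [[∇w]] = 0 on Γ), that Δw = f − ΔV on Ω⁻ and Δw = f on Ω⁺, and that w extends continuously to ∂Ω with boundary values u_b. Then u = w + V·1_{Ω⁻} satisfies: (i) Δu = f on Ω⁻ ∪ Ω⁺; (ii) for every x ∈ Γ, [[u]](x) = γ(x) and [[n·∇u]](x)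 = ρ(x); and (iii) u extends continuously to ∂Ω with boundary values u_b. -/
open Filter Set
open scoped Topology RealInnerProductSpace

/-- The Laplacian of `f : ℝ^d → ℝ` at `x`: the sum of the pure second partial derivatives. -/
noncomputable def lap {d : ℕ} (f : EuclideanSpace ℝ (Fin d) → ℝ)
    (x : EuclideanSpace ℝ (Fin d)) : ℝ :=
  ∑ i : Fin d,
    fderiv ℝ (fun y => fderiv ℝ f y (EuclideanSpace.single i 1)) x (EuclideanSpace.single i 1)

lemma lap_congr {d : ℕ} {f g : EuclideanSpace ℝ (Fin d) → ℝ} {x}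
    (h : f =ᶠ[𝓝 x] g) : lap f x = lap g x := by
  unfold lap
  refine Finset.sum_congr rfl fun i _ => ?_
  have h2 : (fun y => fderiv ℝ f y (EuclideanSpace.single i 1))
      =ᶠ[𝓝 x] fun y => fderiv ℝ g y (EuclideanSpace.single i 1) := by
    filter_upwards [h.eventually_nhds] with y hy
    rw [Filter.EventuallyEq.fderiv_eq hy]
  rw [h2.fderiv_eq]

lemma lap_add {d : ℕ} {f g : EuclideanSpace ℝ (Fin d) → ℝ} {x}
    (hf : ContDiffAt ℝ 2 f x) (hg : ContDiffAt ℝ 2 g x) :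
    lap (fun y => f y + g y) x = lap f x + lap g x := by
  unfold lap
  rw [← Finset.sum_add_distrib]
  refine Finset.sum_congr rfl fun i _ => ?_
  have hf' : ∀ᶠ y in 𝓝 x, DifferentiableAt ℝ f y :=
    (hf.eventually (by norm_num)).mono fun y hy => hy.differentiableAt (by norm_num)
  have hg' : ∀ᶠ y in 𝓝 x, DifferentiableAt ℝ g y :=
    (hg.eventually (by norm_num)).mono fun y hy => hy.differentiableAt (by norm_num)
  have heq : (fun y => fderiv ℝ (fun z => f z + g z) y (EuclideanSpace.single i 1))
      =ᶠ[𝓝 x] fun y => fderiv ℝ f y (EuclideanSpace.single i 1)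
        + fderiv ℝ g y (EuclideanSpace.single i 1) := by
    filter_upwards [hf', hg'] with y hfy hgy
    rw [fderiv_fun_add hfy hgy]; rfl
  rw [heq.fderiv_eq]
  have hdf : DifferentiableAt ℝ (fun y => fderiv ℝ f y (EuclideanSpace.single i 1)) x :=
    ((ContinuousLinearMap.apply ℝ ℝ
      (EuclideanSpace.single i (1:ℝ))).differentiableAt).comp x
      (hf.fderiv_right (m := 1) (by norm_num) |>.differentiableAt (by norm_num))
  have hdg : DifferentiableAt ℝ (fun y => fderiv ℝ g y (EuclideanSpace.single i 1)) x :=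
    ((ContinuousLinearMap.apply ℝ ℝ
      (EuclideanSpace.single i (1:ℝ))).differentiableAt).comp x
      (hg.fderiv_right (m := 1) (by norm_num) |>.differentiableAt (by norm_num))
  rw [fderiv_fun_add hdf hdg]; rfl

lemma gradient_add' {d : ℕ} {f g : EuclideanSpace ℝ (Fin d) → ℝ} {x}
    (hf : DifferentiableAt ℝ f x) (hg : DifferentiableAt ℝ g x) :
    gradient (fun y => f y + g y) x = gradient f x + gradient g x := by
  simp [gradient, fderiv_fun_add hf hg]


/-- **Correctness of the hybrid neural-network/finite-difference decomposition.**
If the singular part `V` (a `C²` function) satisfies `V = -γ`, `n·∇V = -ρ`, `ΔV = -[[f]]`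
on the interface `Γ`, and the regular part `w` is `C²` on `Ω⁻ ∪ Ω⁺`, has matching one-sided
limits of its value and gradient across `Γ`, satisfies `Δw = f - ΔV` in `Ω⁻`, `Δw = f` in
`Ω⁺`, and attains the boundary values `u_b` on `∂Ω`, then `u = w + V · 1_{Ω⁻}` solves the
Poisson interface problem: `Δu = f` in `Ω⁻ ∪ Ω⁺`, `[[u]] = γ` and `[[n·∇u]] = ρ` on `Γ`,
and `u = u_b` on `∂Ω`. -/
theorem hybrid_method_correctness {d : ℕ}
    (Ω Ωm Ωp Γ : Set (EuclideanSpace ℝ (Fin d)))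
    (hΩ : IsOpen Ω) (hΩbd : Bornology.IsBounded Ω)
    (hΩm : IsOpen Ωm) (hΩmΩ : closure Ωm ⊆ Ω)
    (hΩp : Ωp = Ω \ closure Ωm) (hΓ : Γ = frontier Ωm)
    (n : EuclideanSpace ℝ (Fin d) → EuclideanSpace ℝ (Fin d))
    (f γ ρ u_b : EuclideanSpace ℝ (Fin d) → ℝ)
    -- one-sided limits of `f` at every point of the interface:
    (fP fM : EuclideanSpace ℝ (Fin d) → ℝ)
    (hfP : ∀ x ∈ Γ, Tendsto f (𝓝[Ωp] x) (𝓝 (fP x)))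
    (hfM : ∀ x ∈ Γ, Tendsto f (𝓝[Ωm] x) (𝓝 (fM x)))
    -- the singular part `V`:
    (V : EuclideanSpace ℝ (Fin d) → ℝ) (hV : ContDiff ℝ 2 V)
    (hVγ : ∀ x ∈ Γ, V x = -γ x)
    (hVρ : ∀ x ∈ Γ, ⟪n x, gradient V x⟫ = -ρ x)
    (hVf : ∀ x ∈ Γ, lap V x = -(fP x - fM x))
    -- the regular part `w`:
    (w : EuclideanSpace ℝ (Fin d) → ℝ)
    (hw : ContDiffOn ℝ 2 w (Ωm ∪ Ωp))
    (hwval : ∀ x ∈ Γ, ∃ wx : ℝ,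
      Tendsto w (𝓝[Ωp] x) (𝓝 wx) ∧ Tendsto w (𝓝[Ωm] x) (𝓝 wx))
    (hwgrad : ∀ x ∈ Γ, ∃ gx : EuclideanSpace ℝ (Fin d),
      Tendsto (gradient w) (𝓝[Ωp] x) (𝓝 gx) ∧ Tendsto (gradient w) (𝓝[Ωm] x) (𝓝 gx))
    (hwm : ∀ x ∈ Ωm, lap w x = f x - lap V x)
    (hwp : ∀ x ∈ Ωp, lap w x = f x)
    (hwb : ∀ x ∈ frontier Ω, Tendsto w (𝓝[Ω] x) (𝓝 (u_b x)))
    -- the full solution `u`: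
    (u : EuclideanSpace ℝ (Fin d) → ℝ)
    (hu : u = fun x => w x + Set.indicator Ωm V x) :
    -- (i) `Δu = f` on `Ω⁻ ∪ Ω⁺`
    (∀ x ∈ Ωm ∪ Ωp, lap u x = f x) ∧
    -- (ii) `[[u]] = γ` and `[[n·∇u]] = ρ` on `Γ`
    (∀ x ∈ Γ, ∃ up um : ℝ,
      Tendsto u (𝓝[Ωp] x) (𝓝 up) ∧ Tendsto u (𝓝[Ωm] x) (𝓝 um) ∧ up - um = γ x) ∧
    (∀ x ∈ Γ, ∃ ap am : ℝ,
      Tendsto (fun y => ⟪n x, gradient u y⟫) (𝓝[Ωp] x) (𝓝 ap) ∧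
      Tendsto (fun y => ⟪n x, gradient u y⟫) (𝓝[Ωm] x) (𝓝 am) ∧ ap - am = ρ x) ∧
    -- (iii) `u = u_b` on `∂Ω`
    (∀ x ∈ frontier Ω, Tendsto u (𝓝[Ω] x) (𝓝 (u_b x))) := by
  have hop : IsOpen Ωp := by rw [hΩp]; exact hΩ.sdiff isClosed_closure
  have hOpen : IsOpen (Ωm ∪ Ωp) := hΩm.union hop
  have hpnotm : ∀ y ∈ Ωp, y ∉ Ωm := by
    intro y hy; rw [hΩp] at hy; exact fun h => hy.2 (subset_closure h)
  -- eventual equalities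
  have hum : ∀ y ∈ Ωm, u =ᶠ[𝓝 y] fun z => w z + V z := by
    intro y hy
    filter_upwards [hΩm.mem_nhds hy] with z hz
    simp [hu, indicator_of_mem hz]
  have hup : ∀ y ∈ Ωp, u =ᶠ[𝓝 y] w := by
    intro y hy
    filter_upwards [hop.mem_nhds hy] with z hz
    simp [hu, indicator_of_notMem (hpnotm z hz)]
  have hgradV : Continuous (gradient V) := by
    have : Continuous (fderiv ℝ V) := hV.continuous_fderiv (by norm_num)
    exact (InnerProductSpace.toDual ℝ _).symm.continuous.comp this
  refine ⟨?_, ?_, ?_, ?_⟩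
  · -- (i)
    rintro x (hx | hx)
    · have hwx : ContDiffAt ℝ 2 w x :=
        hw.contDiffAt (hOpen.mem_nhds (mem_union_left _ hx))
      rw [lap_congr (hum x hx), lap_add hwx hV.contDiffAt, hwm x hx]
      ring
    · rw [lap_congr (hup x hx), hwp x hx]
  · -- (ii) value jump
    intro x hx
    obtain ⟨wx, hwP, hwM⟩ := hwval x hx
    refine ⟨wx, wx + V x, ?_, ?_, ?_⟩
    · refine Tendsto.congr' ?_ hwP
      filter_upwards [self_mem_nhdsWithin] with y hy
      simp [hu, indicator_of_notMem (hpnotm y hy)]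
    · have : Tendsto (fun y => w y + V y) (𝓝[Ωm] x) (𝓝 (wx + V x)) :=
        hwM.add ((hV.continuous.tendsto x).mono_left nhdsWithin_le_nhds)
      refine Tendsto.congr' ?_ this
      filter_upwards [self_mem_nhdsWithin] with y hy
      simp [hu, indicator_of_mem hy]
    · rw [hVγ x hx]; ring
  · -- (ii) gradient jump
    intro x hx
    obtain ⟨gx, hgP, hgM⟩ := hwgrad x hx
    refine ⟨⟪n x, gx⟫, ⟪n x, gx + gradient V x⟫, ?_, ?_, ?_⟩
    · have : Tendsto (fun y => ⟪n x, gradient w y⟫) (𝓝[Ωp] x) (𝓝 ⟪n x, gx⟫) :=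
        tendsto_const_nhds.inner hgP
      refine Tendsto.congr' ?_ this
      filter_upwards [self_mem_nhdsWithin] with y hy
      rw [(hup y hy).gradient_eq]
    · have : Tendsto (fun y => ⟪n x, gradient w y + gradient V y⟫) (𝓝[Ωm] x)
          (𝓝 ⟪n x, gx + gradient V x⟫) :=
        tendsto_const_nhds.inner (hgM.add ((hgradV.tendsto x).mono_left nhdsWithin_le_nhds))
      refine Tendsto.congr' ?_ this
      filter_upwards [self_mem_nhdsWithin] with y hy
      rw [(hum y hy).gradient_eq, gradient_add'
        ((hw.contDiffAt (hOpen.mem_nhds (mem_union_left _ hy))).differentiableAt (by norm_num))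
        (hV.differentiable (by norm_num) y)]
    · rw [inner_add_right, hVρ x hx]; ring
  · -- (iii)
    intro x hx
    have hxnot : x ∉ closure Ωm := fun h =>
      (disjoint_frontier_iff_isOpen.mpr hΩ).le_bot ⟨hx, hΩmΩ h⟩
    have : Tendsto w (𝓝[Ω] x) (𝓝 (u_b x)) := hwb x hx
    refine Tendsto.congr' ?_ this
    have : u =ᶠ[𝓝 x] w := by
      filter_upwards [isClosed_closure.isOpen_compl.mem_nhds hxnot] with y hy
      simp [hu, indicator_of_notMem (fun h => hy (subset_closure h))]
    exact (this.filter_mono nhdsWithin_le_nhds).symm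
end

section
/- Fix n ≥ 1 and set h = 1/(n+1) and xᵢ = i·h for 1 ≤ i ≤ n. Let A be the n×n matrix with Aᵢᵢ = 2/h², A_{i,i+1} = A_{i+1,i} = −1/h², and all other entries 0. Let C₁, C₂ ≥ 0, let S ⊆ {1,…,n} with |S| ≤ K, and suppose e, r ∈ ℝⁿ satisfy A·e = r with |rᵢ| ≤ C₂·h for i ∈ S and |rᵢ| ≤ C₁·h² for i ∉ S. Then max_{1 ≤ i ≤ n} |eᵢ| ≤ (C₁/8 + K·C₂/4)·h². In particular, an O(h) local truncation error confined to a bounded number K of grid points, together with O(h²) truncation error elsewhere, yields an O(h²) global error in the maximum norm. -/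
noncomputable def gfun (n : ℕ) (h : ℝ) (a b : ℕ) : ℝ :=
  h ^ 3 * ((min a b : ℕ) : ℝ) * ((n : ℝ) + 1 - ((max a b : ℕ) : ℝ))

lemma gaussR (m : ℕ) : ∑ k ∈ Finset.range m, (k : ℝ) = m * (m - 1) / 2 := by
  induction m with
  | zero => simp
  | succ m ih => rw [Finset.sum_range_succ, ih]; push_cast; ring

lemma gfun_zero_right (n : ℕ) (h : ℝ) (a : ℕ) : gfun n h a 0 = 0 := by
  simp [gfun]

lemma gfun_top (n : ℕ) (h : ℝ) (a : ℕ) (ha : a ≤ n + 1) : gfun n h a (n + 1) = 0 := by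
  have : max a (n + 1) = n + 1 := by omega
  simp [gfun, this]

lemma gfun_nonneg (n : ℕ) (h : ℝ) (hpos : 0 ≤ h) (a b : ℕ) (ha : a ≤ n + 1) (hb : b ≤ n + 1) :
    0 ≤ gfun n h a b := by
  have hm : max a b ≤ n + 1 := by omega
  have h2 : ((max a b : ℕ) : ℝ) ≤ (n : ℝ) + 1 := by exact_mod_cast hm
  have h1 : (0:ℝ) ≤ ((min a b : ℕ) : ℝ) := by positivity
  unfold gfun
  exact mul_nonneg (mul_nonneg (by positivity) h1) (by linarith)

lemma gfun_le (n : ℕ) (h : ℝ) (hh : h = 1 / (n + 1)) (a b : ℕ)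
    (ha : a ≤ n + 1) (hb : b ≤ n + 1) : gfun n h a b ≤ h / 4 := by
  have hhn : h * ((n : ℝ) + 1) = 1 := by rw [hh]; field_simp
  have hpos : 0 < h := by rw [hh]; positivity
  set N : ℝ := (n : ℝ) + 1 with hN
  have ht0 : (0:ℝ) ≤ ((min a b : ℕ) : ℝ) := by positivity
  have htM : ((min a b : ℕ) : ℝ) ≤ ((max a b : ℕ) : ℝ) := by
    exact_mod_cast min_le_max
  have hMN : ((max a b : ℕ) : ℝ) ≤ N := by
    have : max a b ≤ n + 1 := by omega
    rw [hN]; exact_mod_cast this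
  have hN2 : h ^ 3 * N ^ 2 = h := by linear_combination (h ^ 2 * N + h) * hhn
  have hkey : ((min a b : ℕ) : ℝ) * (N - ((min a b : ℕ) : ℝ)) ≤ N ^ 2 / 4 := by
    nlinarith [sq_nonneg (N - 2 * ((min a b : ℕ) : ℝ))]
  have step1 : gfun n h a b ≤ h ^ 3 * (((min a b : ℕ) : ℝ) * (N - ((min a b : ℕ) : ℝ))) := by
    unfold gfun
    have : (n : ℝ) + 1 - ((max a b : ℕ) : ℝ) ≤ N - ((min a b : ℕ) : ℝ) := by
      rw [hN]; linarith
    nlinarith [mul_le_mul_of_nonneg_left this (mul_nonneg (pow_pos hpos 3).le ht0)]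
  have step2 : h ^ 3 * (((min a b : ℕ) : ℝ) * (N - ((min a b : ℕ) : ℝ))) ≤ h ^ 3 * (N ^ 2 / 4) :=
    mul_le_mul_of_nonneg_left hkey (by positivity)
  have heq : h ^ 3 * (N ^ 2 / 4) = h / 4 := by linear_combination hN2 / 4
  exact le_trans step1 (le_of_le_of_eq step2 heq)

lemma sum_c_id (c : ℝ) (m : ℕ) :
    ∑ k ∈ Finset.range m, c * ((k : ℝ) + 1) = c * (m * (m + 1) / 2) := by
  induction m with
  | zero => simp
  | succ m ih => rw [Finset.sum_range_succ, ih]; push_cast; ring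

lemma sum_c_rev (c : ℝ) (m : ℕ) :
    ∑ k ∈ Finset.range m, c * ((m : ℝ) - k) = c * (m * (m + 1) / 2) := by
  have : ∀ k ∈ Finset.range m, c * ((m : ℝ) - k) = c * m - c * k := by
    intro k _; ring
  rw [Finset.sum_congr rfl this, Finset.sum_sub_distrib, Finset.sum_const,
    ← Finset.mul_sum, gaussR, Finset.card_range]
  push_cast; ring

lemma gfun_sum_le (n : ℕ) (h : ℝ) (hh : h = 1 / (n + 1)) (a : ℕ)
    (ha1 : 1 ≤ a) (han : a ≤ n) :
    ∑ k ∈ Finset.range n, gfun n h a (k + 1) ≤ 1 / 8 := by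
  have hhn : h * ((n : ℝ) + 1) = 1 := by rw [hh]; field_simp
  have hpos : 0 < h := by rw [hh]; positivity
  have hsplit : ∑ k ∈ Finset.range n, gfun n h a (k + 1)
      = ∑ k ∈ Finset.range a, gfun n h a (k + 1)
        + ∑ k ∈ Finset.Ico a n, gfun n h a (k + 1) := by
    rw [Finset.range_eq_Ico, ← Finset.sum_Ico_consecutive _ (Nat.zero_le a) han, Finset.range_eq_Ico]
  have hS1 : ∑ k ∈ Finset.range a, gfun n h a (k + 1)
      = (h ^ 3 * ((n : ℝ) + 1 - a)) * (a * (a + 1) / 2) := by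
    have hc : ∀ k ∈ Finset.range a, gfun n h a (k + 1)
        = (h ^ 3 * ((n : ℝ) + 1 - a)) * ((k : ℝ) + 1) := by
      intro k hk
      have hk' : k < a := Finset.mem_range.mp hk
      have e1 : min a (k + 1) = k + 1 := by omega
      have e2 : max a (k + 1) = a := by omega
      simp only [gfun, e1, e2]
      push_cast; ring
    rw [Finset.sum_congr rfl hc, sum_c_id]
  have hS2 : ∑ k ∈ Finset.Ico a n, gfun n h a (k + 1)
      = (h ^ 3 * a) * ((n - a : ℕ) * ((n - a : ℕ) + 1) / 2) := by
    rw [Finset.sum_Ico_eq_sum_range]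
    have hc : ∀ k ∈ Finset.range (n - a), gfun n h a (a + k + 1)
        = (h ^ 3 * a) * (((n - a : ℕ) : ℝ) - k) := by
      intro k hk
      have hk' : k < n - a := Finset.mem_range.mp hk
      have e1 : min a (a + k + 1) = a := by omega
      have e2 : max a (a + k + 1) = a + k + 1 := by omega
      have hcast : ((n - a : ℕ) : ℝ) = (n : ℝ) - a := by
        have : a ≤ n := han
        push_cast [Nat.cast_sub this]; ring
      simp only [gfun, e1, e2]
      push_cast [hcast]; ring
    rw [Finset.sum_congr rfl hc, sum_c_rev]
  rw [hsplit, hS1, hS2]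
  have hcast : ((n - a : ℕ) : ℝ) = (n : ℝ) - a := by
    push_cast [Nat.cast_sub han]; ring
  rw [hcast]
  set N : ℝ := (n : ℝ) + 1 with hN
  set x : ℝ := (a : ℝ) with hx
  have h3 : (0:ℝ) < h ^ 3 := by positivity
  have hxN : x ≤ N - 1 := by
    rw [hx, hN]; have : (a : ℝ) ≤ n := by exact_mod_cast han
    linarith
  have hx1 : 1 ≤ x := by rw [hx]; exact_mod_cast ha1
  have hkey : x * (N - x) ≤ N ^ 2 / 4 := by nlinarith [sq_nonneg (N - 2 * x)]
  have hNn : (n : ℝ) = N - 1 := by rw [hN]; ring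
  have hN3 : h ^ 3 * N ^ 3 = 1 := by
    linear_combination ((h * N) ^ 2 + h * N + 1) * hhn
  have hLHS : h ^ 3 * (N - x) * (x * (x + 1) / 2) + h ^ 3 * x * (((N - 1) - x) * (((N - 1) - x) + 1) / 2)
      = h ^ 3 * N / 2 * (x * (N - x)) := by ring
  have hstep : h ^ 3 * N / 2 * (x * (N - x)) ≤ h ^ 3 * N / 2 * (N ^ 2 / 4) := by
    apply mul_le_mul_of_nonneg_left hkey
    have hN0 : (0:ℝ) ≤ N := by rw [hN]; positivity
    positivity
  rw [hNn, hLHS]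
  have hfin : h ^ 3 * N / 2 * (N ^ 2 / 4) = 1 / 8 := by linear_combination hN3 / 8
  linarith [hstep, hfin]
lemma tridiag_sum (c : ℝ) (φ : ℕ → ℝ) (m n : ℕ) (hm : m < n)
    (hφ0 : φ 0 = 0) (hφn : φ (n + 1) = 0) :
    ∑ k ∈ Finset.range n,
      φ (k + 1) * (if k = m then 2 * c else if k + 1 = m ∨ m + 1 = k then -c else 0)
    = c * (2 * φ (m + 1) - φ m - φ (m + 2)) := by
  have hsplit : ∀ k, φ (k + 1) * (if k = m then 2 * c else if k + 1 = m ∨ m + 1 = k then -c else 0)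
      = (if k = m then 2 * c * φ (k + 1) else 0)
        + (if k + 1 = m then -c * φ (k + 1) else 0)
        + (if m + 1 = k then -c * φ (k + 1) else 0) := by
    intro k
    split_ifs <;> first | (exfalso; omega) | ring | (simp_all; omega) | ring_nf
  simp only [hsplit]
  rw [Finset.sum_add_distrib, Finset.sum_add_distrib]
  have h1 : ∑ k ∈ Finset.range n, (if k = m then 2 * c * φ (k + 1) else 0)
      = 2 * c * φ (m + 1) := by
    rw [Finset.sum_ite_eq' (Finset.range n) m (fun k => 2 * c * φ (k + 1))]
    simp [Finset.mem_range.mpr hm]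
  have h2 : ∑ k ∈ Finset.range n, (if k + 1 = m then -c * φ (k + 1) else 0)
      = -c * φ m := by
    rcases Nat.eq_zero_or_pos m with hm0 | hm0
    · subst hm0; simp [hφ0]
    · obtain ⟨m', rfl⟩ := Nat.exists_eq_add_of_lt hm0
      simp only [Nat.zero_add]
      have : ∀ k, (k + 1 = m' + 1) = (k = m') := by intro k; simp
      simp only [this]
      rw [Finset.sum_ite_eq' (Finset.range n) m' (fun k => -c * φ (k + 1))]
      simp [Finset.mem_range.mpr (by omega : m' < n)]
  have h3 : ∑ k ∈ Finset.range n, (if m + 1 = k then -c * φ (k + 1) else 0)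
      = -c * φ (m + 2) := by
    have : ∀ k, (m + 1 = k) = (k = m + 1) := by intro k; simp [eq_comm]
    simp only [this]
    rw [Finset.sum_ite_eq' (Finset.range n) (m + 1) (fun k => -c * φ (k + 1))]
    rcases Nat.lt_or_ge (m + 1) n with hlt | hge
    · simp [Finset.mem_range.mpr hlt]
    · have hmem : m + 1 ∉ Finset.range n := by simp [Finset.mem_range]; omega
      have h2 : m + 2 = n + 1 := by omega
      simp [hmem, h2, hφn]
  rw [h1, h2, h3]; ring
lemma gfun_secdiff (n : ℕ) (h : ℝ) (hh : h = 1 / (n + 1)) (a j : ℕ)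
    (ha1 : 1 ≤ a) (han : a ≤ n) (hj : j < n) :
    2 * gfun n h a (j + 1) - gfun n h a j - gfun n h a (j + 2)
      = if a = j + 1 then h ^ 2 else 0 := by
  have hN : ((n : ℝ) + 1) ≠ 0 := by positivity
  have hhn : h * ((n : ℝ) + 1) = 1 := by rw [hh]; field_simp
  rcases Nat.lt_trichotomy a (j + 1) with hlt | heq | hgt
  · -- a ≤ j
    have haj : a ≤ j := by omega
    have e1 : min a (j + 1) = a := by omega
    have e2 : max a (j + 1) = j + 1 := by omega
    have e3 : min a j = a := by omega
    have e4 : max a j = j := by omega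
    have e5 : min a (j + 2) = a := by omega
    have e6 : max a (j + 2) = j + 2 := by omega
    rw [if_neg (by omega)]
    simp only [gfun, e1, e2, e3, e4, e5, e6]
    push_cast
    ring
  · subst heq
    rw [if_pos rfl]
    simp only [gfun, min_self, max_self, min_eq_right (by omega : j ≤ j + 1),
      max_eq_left (by omega : j ≤ j + 1), min_eq_left (by omega : j + 1 ≤ j + 2),
      max_eq_right (by omega : j + 1 ≤ j + 2)]
    push_cast
    linear_combination h ^ 2 * hhn
  · -- j + 2 ≤ a
    have e1 : min a (j + 1) = j + 1 := by omega
    have e2 : max a (j + 1) = a := by omega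
    have e3 : min a j = j := by omega
    have e4 : max a j = a := by omega
    have e5 : min a (j + 2) = j + 2 := by omega
    have e6 : max a (j + 2) = a := by omega
    rw [if_neg (by omega)]
    simp only [gfun, e1, e2, e3, e4, e5, e6]
    push_cast
    ring

open Matrix

/-- **O(h) truncation error at finitely many points yields O(h²) global error.**
Let `A` be the standard three-point finite-difference matrix for `-d²/dx²` on `(0,1)` with
mesh size `h = 1/(n+1)` and homogeneous Dirichlet boundary conditions. If `A·e = r` where
`|rᵢ| ≤ C₂·h` on a set `S` of at most `K` indices and `|rᵢ| ≤ C₁·h²` elsewhere, then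
`|eᵢ| ≤ (C₁/8 + K·C₂/4)·h²` for every `i`. -/
theorem global_error_from_localized_truncation_error (n : ℕ) (hn : 1 ≤ n)
    (h : ℝ) (hh : h = 1 / (n + 1))
    (A : Matrix (Fin n) (Fin n) ℝ)
    (hA : ∀ i j : Fin n, A i j =
      if i = j then 2 / h ^ 2
      else if (i : ℕ) + 1 = (j : ℕ) ∨ (j : ℕ) + 1 = (i : ℕ) then -1 / h ^ 2
      else 0)
    (C₁ C₂ : ℝ) (hC₁ : 0 ≤ C₁) (hC₂ : 0 ≤ C₂)
    (K : ℕ) (S : Finset (Fin n)) (hS : S.card ≤ K)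
    (e r : Fin n → ℝ) (her : A.mulVec e = r)
    (hrS : ∀ i ∈ S, |r i| ≤ C₂ * h)
    (hrO : ∀ i ∉ S, |r i| ≤ C₁ * h ^ 2) :
    ∀ i : Fin n, |e i| ≤ (C₁ / 8 + K * C₂ / 4) * h ^ 2 := by
  intro i
  have hpos : 0 < h := by rw [hh]; positivity
  have hne : h ≠ 0 := ne_of_gt hpos
  set a : ℕ := (i : ℕ) + 1 with ha
  have hilt : (i : ℕ) < n := i.isLt
  have ha1 : 1 ≤ a := by omega
  have han : a ≤ n := by omega
  -- inner sum identity
  have hinner : ∀ j : Fin n,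
      ∑ k : Fin n, gfun n h a ((k : ℕ) + 1) * A k j = if i = j then (1 : ℝ) else 0 := by
    intro j
    have hAk : ∀ k : Fin n, gfun n h a ((k : ℕ) + 1) * A k j
        = gfun n h a ((k : ℕ) + 1) *
          (if (k : ℕ) = (j : ℕ) then 2 * (1 / h ^ 2)
           else if (k : ℕ) + 1 = (j : ℕ) ∨ (j : ℕ) + 1 = (k : ℕ) then -(1 / h ^ 2) else 0) := by
      intro k
      rw [hA k j]
      congr 1
      by_cases hkj : k = j
      · rw [if_pos hkj, if_pos (by rw [hkj])]; ring
      · rw [if_neg hkj, if_neg (fun hc => hkj (Fin.ext hc))]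
        split_ifs <;> ring
    calc ∑ k : Fin n, gfun n h a ((k : ℕ) + 1) * A k j
        = ∑ k ∈ Finset.range n, gfun n h a (k + 1) *
            (if k = (j : ℕ) then 2 * (1 / h ^ 2)
             else if k + 1 = (j : ℕ) ∨ (j : ℕ) + 1 = k then -(1 / h ^ 2) else 0) := by
          rw [← Fin.sum_univ_eq_sum_range (fun k => gfun n h a (k + 1) *
            (if k = (j : ℕ) then 2 * (1 / h ^ 2)
             else if k + 1 = (j : ℕ) ∨ (j : ℕ) + 1 = k then -(1 / h ^ 2) else 0)) n]
          exact Finset.sum_congr rfl fun k _ => hAk k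
      _ = (1 / h ^ 2) * (2 * gfun n h a ((j : ℕ) + 1) - gfun n h a (j : ℕ)
            - gfun n h a ((j : ℕ) + 2)) :=
          tridiag_sum (1 / h ^ 2) (gfun n h a) (j : ℕ) n j.isLt
            (gfun_zero_right n h a) (gfun_top n h a (by omega))
      _ = (1 / h ^ 2) * (if a = (j : ℕ) + 1 then h ^ 2 else 0) := by
          rw [gfun_secdiff n h hh a (j : ℕ) ha1 han j.isLt]
      _ = if i = j then (1 : ℝ) else 0 := by
          by_cases hij : i = j
          · rw [if_pos (by rw [ha, hij]), if_pos hij]; field_simp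
          · rw [if_neg (fun hc : a = (j : ℕ) + 1 => hij (Fin.ext (by omega))), if_neg hij]
            ring
  -- representation formula
  have hrep : e i = ∑ k : Fin n, gfun n h a ((k : ℕ) + 1) * r k := by
    have hr : ∀ k : Fin n, r k = ∑ j : Fin n, A k j * e j := by
      intro k; rw [← her]; rfl
    calc e i = ∑ j : Fin n, (if i = j then (1 : ℝ) else 0) * e j := by simp
      _ = ∑ j : Fin n, (∑ k : Fin n, gfun n h a ((k : ℕ) + 1) * A k j) * e j := by
          refine Finset.sum_congr rfl fun j _ => ?_
          rw [hinner j]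
      _ = ∑ j : Fin n, ∑ k : Fin n, gfun n h a ((k : ℕ) + 1) * A k j * e j := by
          refine Finset.sum_congr rfl fun j _ => ?_
          rw [Finset.sum_mul]
      _ = ∑ k : Fin n, ∑ j : Fin n, gfun n h a ((k : ℕ) + 1) * A k j * e j :=
          Finset.sum_comm
      _ = ∑ k : Fin n, gfun n h a ((k : ℕ) + 1) * r k := by
          refine Finset.sum_congr rfl fun k _ => ?_
          rw [hr k, Finset.mul_sum]
          exact Finset.sum_congr rfl fun j _ => by ring
  have hgnn : ∀ k : Fin n, 0 ≤ gfun n h a ((k : ℕ) + 1) := fun k =>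
    gfun_nonneg n h hpos.le a _ (by omega) (by have := k.isLt; omega)
  have habs : |e i| ≤ ∑ k : Fin n, gfun n h a ((k : ℕ) + 1) * |r k| := by
    rw [hrep]
    refine (Finset.abs_sum_le_sum_abs _ _).trans (Finset.sum_le_sum fun k _ => ?_)
    rw [abs_mul, abs_of_nonneg (hgnn k)]
  have hsplitS : ∑ k : Fin n, gfun n h a ((k : ℕ) + 1) * |r k|
      = ∑ k ∈ S, gfun n h a ((k : ℕ) + 1) * |r k|
        + ∑ k ∈ Sᶜ, gfun n h a ((k : ℕ) + 1) * |r k| :=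
    (Finset.sum_add_sum_compl S _).symm
  have hb1 : ∑ k ∈ S, gfun n h a ((k : ℕ) + 1) * |r k| ≤ K * C₂ / 4 * h ^ 2 := by
    have hterm : ∀ k ∈ S, gfun n h a ((k : ℕ) + 1) * |r k| ≤ h / 4 * (C₂ * h) := by
      intro k hk
      exact mul_le_mul (gfun_le n h hh a _ (by omega) (by have := k.isLt; omega))
        (hrS k hk) (abs_nonneg _) (by positivity)
    calc ∑ k ∈ S, gfun n h a ((k : ℕ) + 1) * |r k| ≤ ∑ _k ∈ S, h / 4 * (C₂ * h) :=
          Finset.sum_le_sum hterm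
      _ = (S.card : ℝ) * (h / 4 * (C₂ * h)) := by rw [Finset.sum_const, nsmul_eq_mul]
      _ ≤ (K : ℝ) * (h / 4 * (C₂ * h)) := by
          apply mul_le_mul_of_nonneg_right _ (by positivity)
          exact_mod_cast hS
      _ = K * C₂ / 4 * h ^ 2 := by ring
  have hb2 : ∑ k ∈ Sᶜ, gfun n h a ((k : ℕ) + 1) * |r k| ≤ C₁ / 8 * h ^ 2 := by
    have step1 : ∑ k ∈ Sᶜ, gfun n h a ((k : ℕ) + 1) * |r k|
        ≤ ∑ k ∈ Sᶜ, gfun n h a ((k : ℕ) + 1) * (C₁ * h ^ 2) := by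
      refine Finset.sum_le_sum fun k hk => ?_
      exact mul_le_mul_of_nonneg_left (hrO k (Finset.mem_compl.mp hk)) (hgnn k)
    have step2 : ∑ k ∈ Sᶜ, gfun n h a ((k : ℕ) + 1) * (C₁ * h ^ 2)
        = (∑ k ∈ Sᶜ, gfun n h a ((k : ℕ) + 1)) * (C₁ * h ^ 2) := by
      rw [Finset.sum_mul]
    have step3 : ∑ k ∈ Sᶜ, gfun n h a ((k : ℕ) + 1) ≤ ∑ k : Fin n, gfun n h a ((k : ℕ) + 1) :=
      Finset.sum_le_sum_of_subset_of_nonneg (Finset.subset_univ _) (fun k _ _ => hgnn k)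
    have step4 : ∑ k : Fin n, gfun n h a ((k : ℕ) + 1)
        = ∑ k ∈ Finset.range n, gfun n h a (k + 1) :=
      Fin.sum_univ_eq_sum_range (fun k => gfun n h a (k + 1)) n
    have step5 := gfun_sum_le n h hh a ha1 han
    have hsum18 : ∑ k ∈ Sᶜ, gfun n h a ((k : ℕ) + 1) ≤ 1 / 8 := by
      rw [step4] at step3; linarith
    calc ∑ k ∈ Sᶜ, gfun n h a ((k : ℕ) + 1) * |r k|
        ≤ (∑ k ∈ Sᶜ, gfun n h a ((k : ℕ) + 1)) * (C₁ * h ^ 2) := by rw [← step2]; exact step1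
      _ ≤ 1 / 8 * (C₁ * h ^ 2) := by
          apply mul_le_mul_of_nonneg_right hsum18 (by positivity)
      _ = C₁ / 8 * h ^ 2 := by ring
  calc |e i| ≤ ∑ k : Fin n, gfun n h a ((k : ℕ) + 1) * |r k| := habs
    _ = _ := hsplitS
    _ ≤ K * C₂ / 4 * h ^ 2 + C₁ / 8 * h ^ 2 := add_le_add hb1 hb2
    _ = (C₁ / 8 + K * C₂ / 4) * h ^ 2 := by ring
end
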